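/- arXiv:2308.04979 — 3 statements merged into one kernel-verified Lean document; each statement's English description precedes it below -/
import Mathlib

section
/- Let R = K[x_1,...,x_n] be the polynomial ring over a field K, let Δ be a simplicial complex on V = {x_1,...,x_n} with Stanley-Reisner ideal I = I_Δ, and let x be a shedding vertex of Δ. Then Ass(R/I) = Ass(R/(I : x)) ∪ Ass(R/(I, x)). -/
open MvPolynomial

/-- An (abstract) simplicial complex on a vertex set `V`: a collection of finite subsets
of `V` containing all singletons and closed under taking subsets. -/
structure SimplicialComplexOn (V : Type) where
  faces : Set (Finset V)
  singleton_mem : ∀ v : V, {v} ∈ faces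
  down_closed : ∀ {A B : Finset V}, A ∈ faces → B ⊆ A → B ∈ faces

/-- The deletion of a vertex `x`: all faces not containing `x`. -/
def SimplicialComplexOn.del {V : Type} (Δ : SimplicialComplexOn V) (x : V) :
    Set (Finset V) :=
  {F | F ∈ Δ.faces ∧ x ∉ F}

/-- The link of a vertex `x`: all faces `F` with `x ∉ F` and `F ∪ {x}` a face. -/
def SimplicialComplexOn.link {V : Type} [DecidableEq V] (Δ : SimplicialComplexOn V) (x : V) :
    Set (Finset V) :=
  {F | x ∉ F ∧ insert x F ∈ Δ.faces}

/-- `F` is a facet (maximal face) of a collection `S` of faces. -/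
def IsFacetOf {V : Type} (S : Set (Finset V)) (F : Finset V) : Prop :=
  F ∈ S ∧ ∀ G ∈ S, F ⊆ G → F = G

/-- `x` is a shedding vertex of `Δ` if no face of `link_Δ(x)` is a facet of `del_Δ(x)`. -/
def SimplicialComplexOn.IsSheddingVertex {V : Type} [DecidableEq V]
    (Δ : SimplicialComplexOn V) (x : V) : Prop :=
  ∀ F ∈ Δ.link x, ¬ IsFacetOf (Δ.del x) F

/-- The Stanley–Reisner ideal of a simplicial complex on `{x_1, …, x_n}`: the ideal
generated by the squarefree monomials corresponding to non-faces. -/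
noncomputable def srIdeal (n : ℕ) (K : Type) [Field K] (Δ : SimplicialComplexOn (Fin n)) :
    Ideal (MvPolynomial (Fin n) K) :=
  Ideal.span {m | ∃ F : Finset (Fin n), F ∉ Δ.faces ∧ m = ∏ v ∈ F, X v}

/-- The height of a (prime) ideal `p`: the Krull dimension of the set of primes
contained in `p`. -/
noncomputable def idealHeight (R : Type) [CommRing R] (p : Ideal R) : WithBot ℕ∞ :=
  Order.krullDim {q : PrimeSpectrum R // q.asIdeal ≤ p}

/-- An ideal is unmixed if all of its associated primes have the same height. -/
def IsUnmixed (R : Type) [CommRing R] (I : Ideal R) : Prop :=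
  ∀ p ∈ associatedPrimes R (R ⧸ I), ∀ q ∈ associatedPrimes R (R ⧸ I),
    idealHeight R p = idealHeight R q

namespace SheddingAux

variable {n : ℕ} {K : Type} [Field K]

/-- Down-closed set of finsets. -/
def DC (S : Set (Finset (Fin n))) : Prop :=
  ∀ ⦃A B : Finset (Fin n)⦄, A ∈ S → B ⊆ A → B ∈ S

lemma mem_colon_sing {R₀ : Type} [CommRing R₀] {I : Ideal R₀} {x r : R₀} :
    r ∈ I.colon ((Ideal.span {x} : Ideal R₀) : Set R₀) ↔ r * x ∈ I :=
  Submodule.mem_colon_span_singleton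

lemma supp_add (d e : Fin n →₀ ℕ) : (d + e).support = d.support ∪ e.support := by
  ext v
  simp [Finsupp.mem_support_iff, Nat.add_eq_zero, -not_and, not_and_or, or_iff_not_imp_left]

/-- The "Stanley–Reisner" ideal of a down-closed set `S`: polynomials all of whose
monomials have support outside `S`. -/
def Jid (S : Set (Finset (Fin n))) (hS : DC S) : Ideal (MvPolynomial (Fin n) K) where
  carrier := {f | ∀ d ∈ f.support, d.support ∉ S}
  add_mem' := by
    intro a b ha hb d hd
    have := MvPolynomial.support_add (p := a) (q := b) hd
    rcases Finset.mem_union.mp this with h | h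
    · exact ha d h
    · exact hb d h
  zero_mem' := by intro d hd; simp at hd
  smul_mem' := by
    classical
    intro c f hf d hd
    rw [smul_eq_mul] at hd
    have := MvPolynomial.support_mul c f hd
    rcases Finset.mem_add.mp this with ⟨a, ha, b, hb, rfl⟩
    intro hmem
    exact hf b hb (hS hmem (by rw [supp_add]; exact Finset.subset_union_right))

lemma mem_Jid {S : Set (Finset (Fin n))} {hS : DC S} {f : MvPolynomial (Fin n) K} :
    f ∈ Jid S hS ↔ ∀ d ∈ f.support, d.support ∉ S := Iff.rfl

lemma monomial_mem_Jid {S : Set (Finset (Fin n))} {hS : DC S} {d : Fin n →₀ ℕ} {c : K}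
    (h : d.support ∉ S) : monomial d c ∈ Jid S hS := by
  intro e he
  have := MvPolynomial.support_monomial_subset he
  rcases Finset.mem_singleton.mp this with rfl
  exact h

variable {n : ℕ} {K : Type} [Field K]

noncomputable def eF (F : Finset (Fin n)) : Fin n →₀ ℕ := ∑ v ∈ F, Finsupp.single v 1

lemma eF_apply (F : Finset (Fin n)) (w : Fin n) : eF F w = if w ∈ F then 1 else 0 := by
  classical
  rw [eF, Finsupp.finset_sum_apply]
  simp only [Finsupp.single_apply]
  rw [Finset.sum_ite_eq' F w (fun _ => 1)]

lemma supp_eF (F : Finset (Fin n)) : (eF F).support = F := by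
  ext v; simp [Finsupp.mem_support_iff, eF_apply]

lemma prod_X_eq (F : Finset (Fin n)) : (∏ v ∈ F, X v : MvPolynomial (Fin n) K)
    = monomial (eF F) 1 := by
  classical
  induction F using Finset.induction with
  | empty => simp [eF]
  | @insert a s h ih =>
    have he : eF (insert a s) = Finsupp.single a 1 + eF s := by
      rw [eF, Finset.sum_insert h]; rfl
    rw [Finset.prod_insert h, ih, X, monomial_mul, one_mul, he]


lemma dc_powerset (F : Finset (Fin n)) : DC {G : Finset (Fin n) | G ⊆ F} :=
  fun _ _ hA hBA => Set.mem_setOf.mpr (hBA.trans hA)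

/-- The face prime of `F`: the ideal of polynomials none of whose monomials
have support inside `F` (= the ideal generated by the variables outside `F`). -/
noncomputable def pF (F : Finset (Fin n)) : Ideal (MvPolynomial (Fin n) K) :=
  Jid {G | G ⊆ F} (dc_powerset F)

lemma mem_pF {F : Finset (Fin n)} {f : MvPolynomial (Fin n) K} :
    f ∈ pF F ↔ ∀ d ∈ f.support, ¬ d.support ⊆ F := Iff.rfl


noncomputable def phiF (F : Finset (Fin n)) :
    MvPolynomial (Fin n) K →ₐ[K] MvPolynomial (Fin n) K :=
  aeval (fun v => if v ∈ F then X v else 0)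

lemma phiF_monomial (F : Finset (Fin n)) (d : Fin n →₀ ℕ) (c : K) :
    phiF F (monomial d c) = if d.support ⊆ F then monomial d c else 0 := by
  classical
  rw [phiF, aeval_monomial]
  by_cases h : d.support ⊆ F
  · rw [if_pos h, monomial_eq]
    congr 1
    refine Finset.prod_congr rfl (fun v hv => ?_)
    dsimp only
    rw [if_pos (h hv)]
  · rw [if_neg h]
    obtain ⟨v, hv, hvF⟩ := Finset.not_subset.mp h
    refine mul_eq_zero_of_right _ ?_
    refine Finset.prod_eq_zero hv ?_
    dsimp only
    rw [if_neg hvF, zero_pow (Finsupp.mem_support_iff.mp hv)]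

lemma coeff_sum_monomial (T : Finset (Fin n →₀ ℕ)) (c : (Fin n →₀ ℕ) → K) (d : Fin n →₀ ℕ) :
    coeff d (∑ e ∈ T, monomial e (c e)) = if d ∈ T then c d else 0 := by
  classical
  rw [MvPolynomial.coeff_sum T (fun e => monomial e (c e)) d]
  simp only [coeff_monomial]
  rw [Finset.sum_ite_eq' T d c]

lemma pF_eq_ker (F : Finset (Fin n)) :
    pF F = RingHom.ker ((phiF F).toRingHom : MvPolynomial (Fin n) K →+* MvPolynomial (Fin n) K) := by
  classical
  ext f
  rw [RingHom.mem_ker, mem_pF]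
  show _ ↔ phiF F f = 0
  constructor
  · intro hf
    conv_lhs => rw [f.as_sum]
    rw [map_sum]
    refine Finset.sum_eq_zero (fun d hd => ?_)
    rw [phiF_monomial, if_neg (hf d hd)]
  · intro h0 d hd hdF
    have hphi : phiF F f = ∑ e ∈ f.support.filter (fun e => e.support ⊆ F),
        monomial e (coeff e f) := by
      conv_lhs => rw [f.as_sum]
      rw [map_sum, Finset.sum_filter]
      exact Finset.sum_congr rfl (fun e _ => phiF_monomial F e (coeff e f))
    rw [h0] at hphi
    have := coeff_sum_monomial (f.support.filter (fun e => e.support ⊆ F))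
      (fun e => coeff e f) d
    rw [← hphi, if_pos (Finset.mem_filter.mpr ⟨hd, hdF⟩)] at this
    simp only [coeff_zero] at this
    exact Finsupp.mem_support_iff.mp hd this.symm

lemma pF_isPrime (F : Finset (Fin n)) : (pF F : Ideal (MvPolynomial (Fin n) K)).IsPrime := by
  rw [pF_eq_ker]
  exact RingHom.ker_isPrime _


lemma mul_monomial_mem_Jid {S : Set (Finset (Fin n))} {hS : DC S}
    (f : MvPolynomial (Fin n) K) (u : Fin n →₀ ℕ) :
    f * monomial u (1 : K) ∈ Jid S hS ↔ ∀ d ∈ f.support, (d + u).support ∉ S := by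
  classical
  rw [mem_Jid]
  constructor
  · intro h d hd
    refine h (d + u) ?_
    rw [MvPolynomial.mem_support_iff, coeff_mul_monomial', if_pos le_add_self,
      add_tsub_cancel_right, mul_one]
    exact MvPolynomial.mem_support_iff.mp hd
  · intro h e he
    rw [MvPolynomial.mem_support_iff, coeff_mul_monomial'] at he
    by_cases hle : u ≤ e
    · rw [if_pos hle, mul_one] at he
      have := h (e - u) (MvPolynomial.mem_support_iff.mpr he)
      rwa [tsub_add_cancel_of_le hle] at this
    · rw [if_neg hle] at he; exact absurd rfl he

/-- For a facet `F` of `S`, the colon ideal of `Jid S` by the squarefree monomial of `F`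
is exactly the face prime of `F`. -/
lemma colon_facet {S : Set (Finset (Fin n))} {hS : DC S} {F : Finset (Fin n)}
    (hF : IsFacetOf S F) :
    (Jid S hS : Ideal (MvPolynomial (Fin n) K)).colon
      ((Ideal.span {monomial (eF F) 1} : Ideal (MvPolynomial (Fin n) K)) :
        Set (MvPolynomial (Fin n) K)) = pF F := by
  classical
  ext g
  rw [mem_colon_sing, mul_monomial_mem_Jid, mem_pF]
  refine forall₂_congr (fun d _ => ?_)
  rw [supp_add, supp_eF]
  constructor
  · intro h hsub
    exact h (by rw [Finset.union_eq_right.mpr hsub]; exact hF.1)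
  · intro h hmem
    refine h ?_
    have := hF.2 _ hmem Finset.subset_union_right
    exact (Finset.union_subset_iff.mp this.symm.le).1


lemma exists_facet {S : Set (Finset (Fin n))} {G : Finset (Fin n)} (hG : G ∈ S) :
    ∃ F, IsFacetOf S F ∧ G ⊆ F := by
  classical
  have hfin : {H | H ∈ S ∧ G ⊆ H}.Finite := Set.toFinite _
  obtain ⟨F, hF, hmax⟩ := Set.Finite.exists_maximalFor Finset.card _ hfin ⟨G, hG, subset_rfl⟩
  refine ⟨F, ⟨hF.1, fun H hH hFH => ?_⟩, hF.2⟩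
  have hcard := hmax ⟨hH, hF.2.trans hFH⟩ (Finset.card_le_card hFH)
  exact Finset.eq_of_subset_of_card_le hFH hcard

lemma Jid_le_pF {S : Set (Finset (Fin n))} {hS : DC S} {F : Finset (Fin n)}
    (hF : IsFacetOf S F) : (Jid S hS : Ideal (MvPolynomial (Fin n) K)) ≤ pF F := by
  intro f hf d hd hsub
  exact hf d hd (hS hF.1 hsub)

lemma mem_Jid_iff_facets {S : Set (Finset (Fin n))} {hS : DC S} {f : MvPolynomial (Fin n) K} :
    f ∈ Jid S hS ↔ ∀ F, IsFacetOf S F → f ∈ pF F := by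
  constructor
  · intro h F hF
    exact Jid_le_pF hF h
  · intro h d hd hdS
    obtain ⟨F, hF, hGF⟩ := exists_facet hdS
    exact h F hF d hd hGF

lemma mem_ass_iff {R₀ : Type} [CommRing R₀] [IsNoetherianRing R₀] {I : Ideal R₀} {P : Ideal R₀} :
    P ∈ associatedPrimes R₀ (R₀ ⧸ I) ↔ P.IsPrime ∧ ∃ f, P = I.colon ((Ideal.span {f} : Ideal R₀) : Set R₀) := by
  have key : ∀ f : R₀, Submodule.colon (⊥ : Submodule R₀ (R₀ ⧸ I)) {Ideal.Quotient.mk I f}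
      = I.colon ((Ideal.span {f} : Ideal R₀) : Set R₀) := by
    intro f
    ext r
    rw [Submodule.mem_colon_singleton, Submodule.mem_bot, mem_colon_sing]
    rw [Algebra.smul_def, Ideal.Quotient.algebraMap_eq, ← map_mul]
    exact Ideal.Quotient.eq_zero_iff_mem
  rw [AssociatedPrimes.mem_iff, isAssociatedPrime_iff]
  refine and_congr_right fun hP => ?_
  constructor
  · rintro ⟨x, hx⟩
    obtain ⟨f, rfl⟩ := Ideal.Quotient.mk_surjective x
    exact ⟨f, by rw [hx, key]⟩
  · rintro ⟨f, hf⟩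
    exact ⟨Ideal.Quotient.mk I f, by rw [hf, key]⟩

/-- Main structural lemma: the associated primes of `Jid S` are exactly the face primes
of the facets of `S`. -/
lemma ass_Jid {S : Set (Finset (Fin n))} (hS : DC S) :
    associatedPrimes (MvPolynomial (Fin n) K) (MvPolynomial (Fin n) K ⧸ Jid S hS)
      = pF '' {F | IsFacetOf S F} := by
  classical
  ext P
  rw [mem_ass_iff]
  constructor
  · rintro ⟨hP, f, rfl⟩
    set P := (Jid S hS : Ideal (MvPolynomial (Fin n) K)).colon
        ((Ideal.span {f} : Ideal (MvPolynomial (Fin n) K)) : Set (MvPolynomial (Fin n) K)) with hPdef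
    have hmemP : ∀ a, a ∈ P ↔ a * f ∈ Jid S hS := fun a => mem_colon_sing
    set T : Finset (Finset (Fin n)) :=
      {F ∈ (Finset.univ : Finset (Finset (Fin n))) | IsFacetOf S F ∧ f ∉ pF F} with hT
    have hTmem : ∀ F, F ∈ T ↔ IsFacetOf S F ∧ f ∉ pF F := by
      intro F; simp [hT]
    have hPle : ∀ F ∈ T, P ≤ pF F := by
      intro F hF a ha
      obtain ⟨hFf, hfF⟩ := (hTmem F).mp hF
      rcases (pF_isPrime F).mem_or_mem (Jid_le_pF hFf ((hmemP a).mp ha)) with h | h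
      · exact h
      · exact absurd h hfF
    have hex : ∃ F ∈ T, pF F ≤ P := by
      by_contra hcon
      push_neg at hcon
      have hchoice : ∀ F ∈ T, ∃ a, a ∈ pF (K := K) F ∧ a ∉ P := by
        intro F hF
        obtain ⟨a, ha, hna⟩ := SetLike.not_le_iff_exists.mp (hcon F hF)
        exact ⟨a, ha, hna⟩
      choose g hg1 hg2 using hchoice
      set b := ∏ F ∈ T.attach, g F.1 F.2 with hb
      have hbP : b ∉ P := by
        intro hbmem
        rw [Ideal.IsPrime.prod_mem_iff] at hbmem
        obtain ⟨F, _, hFmem⟩ := hbmem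
        exact hg2 F.1 F.2 hFmem
      have hbf : b * f ∈ Jid S hS := by
        rw [mem_Jid_iff_facets]
        intro F hF
        by_cases hfF : f ∈ pF (K := K) F
        · exact Ideal.mul_mem_left _ b hfF
        · have hFT : F ∈ T := (hTmem F).mpr ⟨hF, hfF⟩
          have : b = g F hFT * ∏ G ∈ T.attach.erase ⟨F, hFT⟩, g G.1 G.2 :=
            (Finset.mul_prod_erase T.attach (fun G => g G.1 G.2)
              (Finset.mem_attach T ⟨F, hFT⟩)).symm
          rw [this]
          exact Ideal.mul_mem_right _ _ (Ideal.mul_mem_right _ _ (hg1 F hFT))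
      exact hbP ((hmemP b).mpr hbf)
    obtain ⟨F, hFT, hle⟩ := hex
    exact ⟨F, ((hTmem F).mp hFT).1, le_antisymm hle (hPle F hFT)⟩
  · rintro ⟨F, hF, rfl⟩
    exact ⟨pF_isPrime F, monomial (eF F) 1, (colon_facet hF).symm⟩


lemma Jid_anti {S S' : Set (Finset (Fin n))} {hS : DC S} {hS' : DC S'} (h : S' ⊆ S) :
    (Jid S hS : Ideal (MvPolynomial (Fin n) K)) ≤ Jid S' hS' :=
  fun _ hf d hd hdS => hf d hd (h hdS)

lemma dc_faces (Δ : SimplicialComplexOn (Fin n)) : DC Δ.faces :=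
  fun _ _ hA hBA => Δ.down_closed hA hBA

lemma dc_del (Δ : SimplicialComplexOn (Fin n)) (x : Fin n) : DC (Δ.del x) :=
  fun _ B hA hBA => ⟨Δ.down_closed hA.1 hBA, fun hx => hA.2 (hBA hx)⟩

lemma dc_star (Δ : SimplicialComplexOn (Fin n)) (x : Fin n) :
    DC {F : Finset (Fin n) | insert x F ∈ Δ.faces} := by
  intro A B hA hBA
  exact Δ.down_closed hA (Finset.insert_subset_insert x hBA)

lemma eF_le {d : Fin n →₀ ℕ} : eF d.support ≤ d := by
  intro v
  rw [eF_apply]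
  by_cases h : v ∈ d.support
  · rw [if_pos h]; exact Nat.one_le_iff_ne_zero.mpr (Finsupp.mem_support_iff.mp h)
  · rw [if_neg h]; exact Nat.zero_le _

lemma srIdeal_eq (Δ : SimplicialComplexOn (Fin n)) :
    srIdeal n K Δ = Jid Δ.faces (dc_faces Δ) := by
  apply le_antisymm
  · rw [srIdeal, Ideal.span_le]
    rintro m ⟨F, hF, rfl⟩
    rw [SetLike.mem_coe, prod_X_eq]
    exact monomial_mem_Jid (by rwa [supp_eF])
  · intro f hf
    rw [f.as_sum]
    refine Ideal.sum_mem _ (fun d hd => ?_)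
    have hsplit : monomial d (coeff d f)
        = (∏ v ∈ d.support, X v) * monomial (d - eF d.support) (coeff d f) := by
      rw [prod_X_eq, monomial_mul, one_mul, add_tsub_cancel_of_le eF_le]
    rw [hsplit]
    exact Ideal.mul_mem_right _ _ (Ideal.subset_span ⟨d.support, hf d hd, rfl⟩)

lemma sup_eq_Jid_del (Δ : SimplicialComplexOn (Fin n)) (x : Fin n) :
    (Jid Δ.faces (dc_faces Δ) : Ideal (MvPolynomial (Fin n) K)) ⊔ Ideal.span {X x}
      = Jid (Δ.del x) (dc_del Δ x) := by
  classical
  apply le_antisymm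
  · refine sup_le (Jid_anti (fun F hF => hF.1)) ?_
    rw [Ideal.span_le, Set.singleton_subset_iff, SetLike.mem_coe, X]
    refine monomial_mem_Jid ?_
    rw [Finsupp.support_single_ne_zero x one_ne_zero]
    exact fun h => h.2 (Finset.mem_singleton_self x)
  · intro f hf
    rw [f.as_sum]
    refine Ideal.sum_mem _ (fun d hd => ?_)
    by_cases hx : x ∈ d.support
    · refine Ideal.mem_sup_right ?_
      have hle : Finsupp.single x 1 ≤ d := by
        intro v
        rw [Finsupp.single_apply]
        by_cases h : x = v
        · subst h; rw [if_pos rfl]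
          exact Nat.one_le_iff_ne_zero.mpr (Finsupp.mem_support_iff.mp hx)
        · rw [if_neg h]; exact Nat.zero_le _
      have : monomial d (coeff d f) = X x * monomial (d - Finsupp.single x 1) (coeff d f) := by
        rw [X, monomial_mul, one_mul, add_tsub_cancel_of_le hle]
      rw [this]
      exact Ideal.mul_mem_right _ _ (Ideal.subset_span rfl)
    · refine Ideal.mem_sup_left (monomial_mem_Jid ?_)
      intro hmem
      exact hf d hd ⟨hmem, hx⟩

lemma colon_eq_Jid_star (Δ : SimplicialComplexOn (Fin n)) (x : Fin n) :
    (Jid Δ.faces (dc_faces Δ) : Ideal (MvPolynomial (Fin n) K)).colon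
        ((Ideal.span {X x} : Ideal (MvPolynomial (Fin n) K)) : Set (MvPolynomial (Fin n) K))
      = Jid {F | insert x F ∈ Δ.faces} (dc_star Δ x) := by
  classical
  ext f
  rw [mem_colon_sing, X, mul_monomial_mem_Jid]
  refine forall₂_congr (fun d hd => ?_)
  rw [supp_add, Finsupp.support_single_ne_zero x one_ne_zero]
  have : d.support ∪ {x} = insert x d.support := by
    rw [Finset.union_comm, ← Finset.insert_eq]
  rw [this]
  rfl

lemma facet_star_iff (Δ : SimplicialComplexOn (Fin n)) (x : Fin n) (F : Finset (Fin n)) :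
    IsFacetOf {G : Finset (Fin n) | insert x G ∈ Δ.faces} F
      ↔ IsFacetOf Δ.faces F ∧ x ∈ F := by
  constructor
  · rintro ⟨hF, hmax⟩
    have hxF : x ∈ F := by
      have hins : insert x F ∈ {G : Finset (Fin n) | insert x G ∈ Δ.faces} := by
        simpa [Finset.insert_idem] using hF
      have := hmax _ hins (Finset.subset_insert x F)
      rw [this]; exact Finset.mem_insert_self x F
    have hFf : F ∈ Δ.faces := by
      have : insert x F = F := Finset.insert_eq_self.mpr hxF
      rw [← this]; exact hF
    refine ⟨⟨hFf, fun G hG hFG => ?_⟩, hxF⟩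
    refine hmax G ?_ hFG
    have : insert x G = G := Finset.insert_eq_self.mpr (hFG hxF)
    show insert x G ∈ Δ.faces
    rw [this]; exact hG
  · rintro ⟨⟨hFf, hmax⟩, hxF⟩
    have hins : insert x F = F := Finset.insert_eq_self.mpr hxF
    refine ⟨by show insert x F ∈ Δ.faces; rw [hins]; exact hFf, fun G hG hFG => ?_⟩
    refine hmax G ?_ hFG
    exact Δ.down_closed hG (Finset.subset_insert x G)

lemma facet_del_iff (Δ : SimplicialComplexOn (Fin n)) (x : Fin n)
    (hx : Δ.IsSheddingVertex x) (F : Finset (Fin n)) :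
    IsFacetOf (Δ.del x) F ↔ IsFacetOf Δ.faces F ∧ x ∉ F := by
  constructor
  · rintro ⟨⟨hFf, hxF⟩, hmax⟩
    have hnotins : insert x F ∉ Δ.faces := by
      intro hins
      exact hx F ⟨hxF, hins⟩ ⟨⟨hFf, hxF⟩, hmax⟩
    refine ⟨⟨hFf, fun G hG hFG => ?_⟩, hxF⟩
    by_cases hxG : x ∈ G
    · exact absurd (Δ.down_closed hG (Finset.insert_subset hxG hFG)) hnotins
    · exact hmax G ⟨hG, hxG⟩ hFG
  · rintro ⟨⟨hFf, hmax⟩, hxF⟩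
    exact ⟨⟨hFf, hxF⟩, fun G hG hFG => hmax G hG.1 hFG⟩

end SheddingAux

/-- If `I = I_Δ` is the Stanley–Reisner ideal of a simplicial complex `Δ` on
`{x_1, …, x_n}` and `x` is a shedding vertex of `Δ`, then
`Ass(R/I) = Ass(R/(I : x)) ∪ Ass(R/(I, x))`. -/
theorem ass_eq_union_of_shedding (n : ℕ) (K : Type) [Field K]
    (Δ : SimplicialComplexOn (Fin n)) (x : Fin n) (hx : Δ.IsSheddingVertex x)
    (I : Ideal (MvPolynomial (Fin n) K)) (hI : I = srIdeal n K Δ) :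
    associatedPrimes (MvPolynomial (Fin n) K) (MvPolynomial (Fin n) K ⧸ I) =
      associatedPrimes (MvPolynomial (Fin n) K)
          (MvPolynomial (Fin n) K ⧸ I.colon ((Ideal.span {X x} : Ideal (MvPolynomial (Fin n) K)) : Set (MvPolynomial (Fin n) K))) ∪
        associatedPrimes (MvPolynomial (Fin n) K)
          (MvPolynomial (Fin n) K ⧸ (I ⊔ Ideal.span {X x})) := by
  classical
  have hIJ : I = SheddingAux.Jid Δ.faces (SheddingAux.dc_faces Δ) := by
    rw [hI, SheddingAux.srIdeal_eq]
  have hsets : {F : Finset (Fin n) | IsFacetOf Δ.faces F}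
      = {F | IsFacetOf {G : Finset (Fin n) | insert x G ∈ Δ.faces} F}
        ∪ {F | IsFacetOf (Δ.del x) F} := by
    ext F
    simp only [Set.mem_setOf_eq, Set.mem_union, SheddingAux.facet_star_iff,
      SheddingAux.facet_del_iff Δ x hx]
    tauto
  rw [hIJ, SheddingAux.colon_eq_Jid_star, SheddingAux.sup_eq_Jid_del,
    SheddingAux.ass_Jid, SheddingAux.ass_Jid, SheddingAux.ass_Jid, hsets, Set.image_union]
end

section
/- Let R = K[x_1,...,x_n] be the polynomial ring over a field K, let Δ be a simplicial complex on V = {x_1,...,x_n} with Stanley-Reisner ideal I = I_Δ, and let x be a shedding vertex of Δ. If I is unmixed, then (I : x) and (I, x) are unmixed. -/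
open MvPolynomial

section AuxGeneral
variable {R : Type*} [CommRing R]

lemma annihilator_mk_eq (I : Ideal R) (y : R) (r : R) :
    r ∈ (⊥ : Submodule R (R ⧸ I)).colon {Ideal.Quotient.mk I y} ↔ r * y ∈ I := by
  rw [Submodule.mem_colon_singleton, Submodule.mem_bot, Algebra.smul_def,
    Ideal.Quotient.algebraMap_eq, ← map_mul, Ideal.Quotient.eq_zero_iff_mem]

/-- Associated primes of a finite intersection of primes are minimal members. -/
lemma assoc_inf_primes [IsNoetherianRing R] {S : Finset (Ideal R)} (hS : ∀ q ∈ S, q.IsPrime)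
    {I : Ideal R} (hI : I = S.inf id) {p : Ideal R}
    (hp : p ∈ associatedPrimes R (R ⧸ I)) :
    p ∈ S ∧ ∀ q ∈ S, q ≤ p → q = p := by
  classical
  obtain ⟨hpp, y', hy⟩ := (isAssociatedPrime_iff (I := p) (M := R ⧸ I)).mp hp
  obtain ⟨y, rfl⟩ := Ideal.Quotient.mk_surjective y'
  have hann : ∀ r : R, r ∈ p ↔ r * y ∈ I := fun r => by
    rw [hy]; exact annihilator_mk_eq I y r
  set T := S.filter (fun q => y ∉ q) with hT
  have hpT : p = T.inf id := by
    ext r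
    rw [hann, hI, Submodule.mem_finsetInf, Submodule.mem_finsetInf]
    constructor
    · intro h q hq
      rcases Finset.mem_filter.mp hq with ⟨hqS, hyq⟩
      exact ((hS q hqS).mem_or_mem (h q hqS)).resolve_right hyq
    · intro h q hq
      by_cases hyq : y ∈ q
      · exact Ideal.mul_mem_left _ _ hyq
      · exact Ideal.mul_mem_right _ _ (h q (Finset.mem_filter.mpr ⟨hq, hyq⟩))
  have hle : T.inf id ≤ p := le_of_eq hpT.symm
  obtain ⟨q0, hq0T, hq0p⟩ := hpp.inf_le'.mp hle
  have hpq0 : p ≤ q0 := hpT ▸ Finset.inf_le hq0T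
  have hpq0' : p = q0 := le_antisymm hpq0 hq0p
  rcases Finset.mem_filter.mp hq0T with ⟨hq0S, hyq0⟩
  subst hpq0'
  refine ⟨hq0S, fun q hq hqp => ?_⟩
  have hyq : y ∉ q := fun h => hyq0 (hqp h)
  have : p ≤ q := hpT ▸ Finset.inf_le (Finset.mem_filter.mpr ⟨hq, hyq⟩)
  exact le_antisymm hqp this

/-- A minimal member of a finite set of primes is associated to their intersection. -/
lemma minimal_mem_assoc [IsNoetherianRing R] {S : Finset (Ideal R)} (hS : ∀ q ∈ S, q.IsPrime)
    {I : Ideal R} (hI : I = S.inf id) {q0 : Ideal R} (hq0 : q0 ∈ S)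
    (hmin : ∀ q ∈ S, q ≤ q0 → q = q0) :
    q0 ∈ associatedPrimes R (R ⧸ I) := by
  classical
  have hq0p := hS q0 hq0
  have h1 : ¬ ((S.erase q0).inf id ≤ q0) := by
    intro h
    obtain ⟨q, hqS, hq⟩ := hq0p.inf_le'.mp h
    exact (Finset.mem_erase.mp hqS).1 (hmin q (Finset.mem_of_mem_erase hqS) hq)
  obtain ⟨y, hyT, hyq0⟩ := SetLike.not_le_iff_exists.mp h1
  refine (isAssociatedPrime_iff (I := q0) (M := R ⧸ I)).mpr ⟨hq0p, Ideal.Quotient.mk I y, ?_⟩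
  ext r
  rw [annihilator_mk_eq, hI, Submodule.mem_finsetInf]
  constructor
  · intro hr q hq
    by_cases h : q = q0
    · subst h; exact Ideal.mul_mem_right _ _ hr
    · exact Ideal.mul_mem_left _ _
        (Submodule.mem_finsetInf.mp hyT q (Finset.mem_erase.mpr ⟨h, hq⟩))
  · intro h
    exact (hq0p.mem_or_mem (h q0 hq0)).resolve_right hyq0

end AuxGeneral

section AuxMv
variable {n : ℕ} {K : Type} [Field K]
set_option linter.unusedVariables false


/-- The prime generated by the variables in `S`. -/
noncomputable def PP (K : Type) [Field K] {n : ℕ} (S : Finset (Fin n)) :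
    Ideal (MvPolynomial (Fin n) K) :=
  Ideal.span (MvPolynomial.X '' {v | v ∈ S})

lemma mem_PP {S : Finset (Fin n)} {f : MvPolynomial (Fin n) K} :
    f ∈ PP K S ↔ ∀ m ∈ f.support, ∃ v ∈ S, m v ≠ 0 := by
  rw [PP, mem_ideal_span_X_image]
  simp

lemma X_mem_PP {S : Finset (Fin n)} {v : Fin n} : X v ∈ PP K S ↔ v ∈ S := by
  constructor
  · intro h
    rw [mem_PP] at h
    obtain ⟨w, hw, hne⟩ := h (Finsupp.single v 1) (by simp [support_X])
    rcases eq_or_ne w v with rfl | hne'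
    · exact hw
    · simp [Finsupp.single_apply, hne'.symm] at hne
  · intro hv
    exact Ideal.subset_span ⟨v, hv, rfl⟩

lemma PP_mono {S T : Finset (Fin n)} (h : S ⊆ T) : PP K S ≤ (PP K T : Ideal _) :=
  Ideal.span_mono (Set.image_mono (fun v hv => h hv))

lemma PP_le_iff {S T : Finset (Fin n)} : PP K S ≤ (PP K T : Ideal _) ↔ S ⊆ T :=
  ⟨fun h v hv => X_mem_PP.mp (h (X_mem_PP.mpr hv)), PP_mono⟩

lemma coeff_aeval_kill {S : Finset (Fin n)} {m0 : Fin n →₀ ℕ}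
    (hm0 : ∀ v ∈ S, m0 v = 0) (f : MvPolynomial (Fin n) K) :
    coeff m0 (aeval (fun v => if v ∈ S then 0 else X v) f) = coeff m0 f := by
  classical
  conv_lhs => rw [as_sum f]
  rw [map_sum, coeff_sum]
  rw [Finset.sum_eq_single m0]
  · by_cases hm : m0 ∈ f.support
    · rw [aeval_monomial]
      have hprod : (m0.prod fun i k => (if i ∈ S then 0 else X i : MvPolynomial (Fin n) K) ^ k)
          = m0.prod fun i k => (X i : MvPolynomial (Fin n) K) ^ k := by
        apply Finset.prod_congr rfl
        intro i hi
        have hiS : i ∉ S := fun h => (Finsupp.mem_support_iff.mp hi) (hm0 i h)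
        show (if i ∈ S then 0 else X i : MvPolynomial (Fin n) K) ^ m0 i = (X i) ^ m0 i
        rw [if_neg hiS]
      rw [hprod, algebraMap_eq, ← monomial_eq, coeff_monomial, if_pos rfl]
    · rw [notMem_support_iff.mp hm, monomial_zero, map_zero, coeff_zero]
  · intro m hm hne
    rw [aeval_monomial]
    by_cases hS : ∃ v ∈ m.support, v ∈ S
    · obtain ⟨v, hv, hvS⟩ := hS
      have h0 : (m.prod fun i k => (if i ∈ S then 0 else X i : MvPolynomial (Fin n) K) ^ k)
          = 0 := by
        apply Finset.prod_eq_zero hv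
        show (if v ∈ S then 0 else X v : MvPolynomial (Fin n) K) ^ m v = 0
        rw [if_pos hvS]
        exact zero_pow (Finsupp.mem_support_iff.mp hv)
      rw [h0, mul_zero, coeff_zero]
    · push_neg at hS
      have hprod : (m.prod fun i k => (if i ∈ S then 0 else X i : MvPolynomial (Fin n) K) ^ k)
          = m.prod fun i k => (X i : MvPolynomial (Fin n) K) ^ k := by
        apply Finset.prod_congr rfl
        intro i hi
        show (if i ∈ S then 0 else X i : MvPolynomial (Fin n) K) ^ m i = (X i) ^ m i
        rw [if_neg (hS i hi)]
      rw [hprod, algebraMap_eq, ← monomial_eq, coeff_monomial, if_neg hne]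
  · intro h
    rw [notMem_support_iff.mp h, monomial_zero, map_zero, coeff_zero]

lemma PP_eq_ker (S : Finset (Fin n)) :
    PP K S = RingHom.ker (aeval (fun v => if v ∈ S then 0 else X v) :
      MvPolynomial (Fin n) K →ₐ[K] MvPolynomial (Fin n) K) := by
  apply le_antisymm
  · rw [PP, Ideal.span_le]
    rintro _ ⟨v, hv, rfl⟩
    simp only [SetLike.mem_coe, RingHom.mem_ker]
    rw [show ((aeval (fun v => if v ∈ S then 0 else X v) :
        MvPolynomial (Fin n) K →ₐ[K] MvPolynomial (Fin n) K)) (X v)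
      = (if v ∈ S then 0 else X v) from aeval_X _ v, if_pos (show v ∈ S from hv)]
  · intro f hf
    rw [RingHom.mem_ker] at hf
    rw [mem_PP]
    intro m hm
    by_contra hc
    push_neg at hc
    have := coeff_aeval_kill hc f
    rw [hf, coeff_zero] at this
    exact (mem_support_iff.mp hm) this.symm

lemma PP_isPrime (S : Finset (Fin n)) : (PP K S : Ideal (MvPolynomial (Fin n) K)).IsPrime := by
  rw [PP_eq_ker]
  exact RingHom.ker_isPrime _


lemma ind_apply {F : Finset (Fin n)} {v : Fin n} :
    (∑ w ∈ F, Finsupp.single w (1:ℕ)) v = if v ∈ F then 1 else 0 := by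
  classical
  rw [Finsupp.finset_sum_apply]
  simp [Finsupp.single_apply]

lemma ind_le_iff {F : Finset (Fin n)} {m : Fin n →₀ ℕ} :
    (∑ v ∈ F, Finsupp.single v (1:ℕ)) ≤ m ↔ F ⊆ m.support := by
  rw [Finsupp.le_def]
  constructor
  · intro h v hv
    have := h v
    rw [ind_apply, if_pos hv] at this
    exact Finsupp.mem_support_iff.mpr (Nat.one_le_iff_ne_zero.mp this)
  · intro h v
    rw [ind_apply]
    by_cases hv : v ∈ F
    · rw [if_pos hv]
      exact Nat.one_le_iff_ne_zero.mpr (Finsupp.mem_support_iff.mp (h hv))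
    · rw [if_neg hv]
      exact Nat.zero_le _

lemma prod_X_eq (F : Finset (Fin n)) :
    (∏ v ∈ F, (X v : MvPolynomial (Fin n) K))
      = monomial (∑ v ∈ F, Finsupp.single v 1) 1 := by
  classical
  induction F using Finset.cons_induction with
  | empty => simp [monomial_zero']
  | cons a s ha ih =>
      rw [Finset.prod_cons, Finset.sum_cons, ih,
        show (X a : MvPolynomial (Fin n) K) = monomial (Finsupp.single a 1) 1 from rfl,
        monomial_mul, one_mul]

lemma gen_set_eq (Γ : Set (Finset (Fin n))) :
    {m : MvPolynomial (Fin n) K | ∃ F, F ∉ Γ ∧ m = ∏ v ∈ F, X v}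
      = (fun d => monomial d (1:K)) ''
          ((fun F : Finset (Fin n) => ∑ v ∈ F, Finsupp.single v (1:ℕ)) '' {F | F ∉ Γ}) := by
  ext m
  simp only [Set.mem_setOf_eq, Set.image_image, Set.mem_image]
  constructor
  · rintro ⟨F, hF, rfl⟩; exact ⟨F, hF, (prod_X_eq F).symm⟩
  · rintro ⟨F, hF, rfl⟩; exact ⟨F, hF, (prod_X_eq F).symm⟩

lemma mem_srSpan {Γ : Set (Finset (Fin n))}
    (hdc : ∀ {A B : Finset (Fin n)}, A ∈ Γ → B ⊆ A → B ∈ Γ)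
    {f : MvPolynomial (Fin n) K} :
    f ∈ Ideal.span {m : MvPolynomial (Fin n) K | ∃ F, F ∉ Γ ∧ m = ∏ v ∈ F, X v} ↔
      ∀ m ∈ f.support, m.support ∉ Γ := by
  rw [gen_set_eq, mem_ideal_span_monomial_image]
  constructor
  · intro h m hm hmem
    obtain ⟨d, hd, hdm⟩ := h m hm
    obtain ⟨F, hF, rfl⟩ := hd
    exact hF (hdc hmem (ind_le_iff.mp hdm))
  · intro h m hm
    exact ⟨_, ⟨m.support, h m hm, rfl⟩, ind_le_iff.mpr subset_rfl⟩

open scoped Classical in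
noncomputable def Sfin (K : Type) [Field K] {n : ℕ} (Γ : Set (Finset (Fin n))) :
    Finset (Ideal (MvPolynomial (Fin n) K)) :=
  (Finset.univ.filter (· ∈ Γ)).image (fun G => PP K Gᶜ)

lemma mem_Sfin {Γ : Set (Finset (Fin n))} {q : Ideal (MvPolynomial (Fin n) K)} :
    q ∈ Sfin K Γ ↔ ∃ G ∈ Γ, q = PP K Gᶜ := by
  simp only [Sfin, Finset.mem_image, Finset.mem_filter, Finset.mem_univ, true_and]
  exact ⟨fun ⟨G, h1, h2⟩ => ⟨G, h1, h2.symm⟩, fun ⟨G, h1, h2⟩ => ⟨G, h1, h2.symm⟩⟩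

lemma mem_inf_Sfin {Γ : Set (Finset (Fin n))} {f : MvPolynomial (Fin n) K} :
    f ∈ (Sfin K Γ).inf id ↔ ∀ G ∈ Γ, f ∈ PP K Gᶜ := by
  rw [Submodule.mem_finsetInf]
  constructor
  · intro h G hG; exact h _ (mem_Sfin.mpr ⟨G, hG, rfl⟩)
  · rintro h q hq; obtain ⟨G, hG, rfl⟩ := mem_Sfin.mp hq; exact h G hG

lemma srSpan_eq_inf {Γ : Set (Finset (Fin n))}
    (hdc : ∀ {A B : Finset (Fin n)}, A ∈ Γ → B ⊆ A → B ∈ Γ) :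
    Ideal.span {m : MvPolynomial (Fin n) K | ∃ F, F ∉ Γ ∧ m = ∏ v ∈ F, X v}
      = (Sfin K Γ).inf id := by
  ext f
  rw [mem_srSpan hdc, mem_inf_Sfin]
  constructor
  · intro h G hG
    rw [mem_PP]
    intro m hm
    by_contra hc
    push_neg at hc
    have hsub : m.support ⊆ G := by
      intro v hv
      by_contra hvG
      exact (Finsupp.mem_support_iff.mp hv) (hc v (Finset.mem_compl.mpr hvG))
    exact h m hm (hdc hG hsub)
  · intro h m hm hmem
    obtain ⟨v, hvc, hv⟩ := mem_PP.mp (h m.support hmem) m hm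
    exact (Finset.mem_compl.mp hvc) (Finsupp.mem_support_iff.mpr hv)

end AuxMv

/-- If `I = I_Δ` is the Stanley–Reisner ideal of a simplicial complex `Δ` on
`{x_1, …, x_n}`, `x` is a shedding vertex of `Δ`, and `I` is unmixed, then
`(I : x)` and `(I, x)` are unmixed. -/
theorem unmixed_colon_and_sup_of_shedding (n : ℕ) (K : Type) [Field K]
    (Δ : SimplicialComplexOn (Fin n)) (x : Fin n) (hx : Δ.IsSheddingVertex x)
    (I : Ideal (MvPolynomial (Fin n) K)) (hI : I = srIdeal n K Δ)
    (hunm : IsUnmixed (MvPolynomial (Fin n) K) I) :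
    IsUnmixed (MvPolynomial (Fin n) K) (I.colon ((Ideal.span {X x} : Ideal (MvPolynomial (Fin n) K)) : Set (MvPolynomial (Fin n) K))) ∧
      IsUnmixed (MvPolynomial (Fin n) K) (I ⊔ Ideal.span {X x}) := by
  classical
  have hprimes : ∀ (Γ : Set (Finset (Fin n))),
      ∀ q ∈ Sfin K Γ, q.IsPrime := by
    intro Γ q hq
    obtain ⟨G, _, rfl⟩ := mem_Sfin.mp hq
    exact PP_isPrime _
  have hIinf : I = (Sfin K Δ.faces).inf id := by
    rw [hI, srIdeal]
    exact srSpan_eq_inf (fun {A B} hA hBA => Δ.down_closed hA hBA)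
  have hdcdel : ∀ {A B : Finset (Fin n)}, A ∈ Δ.del x → B ⊆ A → B ∈ Δ.del x :=
    fun {A B} hA hBA => ⟨Δ.down_closed hA.1 hBA, fun hxB => hA.2 (hBA hxB)⟩
  have hJspan : I ⊔ Ideal.span {X x}
      = Ideal.span {m : MvPolynomial (Fin n) K | ∃ F, F ∉ Δ.del x ∧ m = ∏ v ∈ F, X v} := by
    apply le_antisymm
    · apply sup_le
      · rw [hI, srIdeal]
        apply Ideal.span_mono
        rintro m ⟨F, hF, rfl⟩
        exact ⟨F, fun h => hF h.1, rfl⟩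
      · rw [Ideal.span_le, Set.singleton_subset_iff]
        refine Ideal.subset_span ⟨{x}, fun h => h.2 (Finset.mem_singleton_self x), ?_⟩
        rw [Finset.prod_singleton]
    · rw [Ideal.span_le]
      rintro m ⟨F, hF, rfl⟩
      by_cases hxF : x ∈ F
      · apply Ideal.mem_sup_right
        rw [Ideal.mem_span_singleton]
        exact ⟨∏ v ∈ F.erase x, X v, (Finset.mul_prod_erase F _ hxF).symm⟩
      · apply Ideal.mem_sup_left
        rw [hI, srIdeal]
        exact Ideal.subset_span ⟨F, fun h => hF ⟨h, hxF⟩, rfl⟩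
  have hJinf : I ⊔ Ideal.span {X x} = (Sfin K (Δ.del x)).inf id :=
    hJspan.trans (srSpan_eq_inf hdcdel)
  have hCinf : I.colon ((Ideal.span {X x} : Ideal (MvPolynomial (Fin n) K)) : Set (MvPolynomial (Fin n) K))
      = (Sfin K {G : Finset (Fin n) | G ∈ Δ.faces ∧ x ∈ G}).inf id := by
    have hIm : ∀ g : MvPolynomial (Fin n) K, g ∈ I ↔ ∀ G ∈ Δ.faces, g ∈ PP K Gᶜ := by
      intro g
      rw [hIinf]
      exact mem_inf_Sfin
    ext r
    rw [Ideal.mem_colon_span_singleton, mem_inf_Sfin, hIm]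
    constructor
    · rintro h G ⟨hGf, hxG⟩
      have h2 := h G hGf
      have hxn : (X x : MvPolynomial (Fin n) K) ∉ PP K Gᶜ :=
        fun hc => (Finset.mem_compl.mp (X_mem_PP.mp hc)) hxG
      exact ((PP_isPrime _).mem_or_mem h2).resolve_right hxn
    · intro h G hG
      by_cases hxG : x ∈ G
      · exact Ideal.mul_mem_right _ _ (h G ⟨hG, hxG⟩)
      · exact Ideal.mul_mem_left _ _ (X_mem_PP.mpr (Finset.mem_compl.mpr hxG))
  have key : ∀ G : Finset (Fin n), G ∈ Δ.faces → (∀ H ∈ Δ.faces, G ⊆ H → G = H) →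
      PP K Gᶜ ∈ associatedPrimes (MvPolynomial (Fin n) K) (MvPolynomial (Fin n) K ⧸ I) := by
    intro G hG hmax
    refine minimal_mem_assoc (hprimes _) hIinf (mem_Sfin.mpr ⟨G, hG, rfl⟩) ?_
    intro q hq hle
    obtain ⟨H, hH, rfl⟩ := mem_Sfin.mp hq
    have hGH : G ⊆ H := Finset.compl_subset_compl.mp (PP_le_iff.mp hle)
    rw [hmax H hH hGH]
  constructor
  · -- the colon ideal
    have hmem : ∀ r ∈ associatedPrimes (MvPolynomial (Fin n) K)
        (MvPolynomial (Fin n) K ⧸ I.colon ((Ideal.span {X x} : Ideal (MvPolynomial (Fin n) K)) : Set (MvPolynomial (Fin n) K))),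
        r ∈ associatedPrimes (MvPolynomial (Fin n) K) (MvPolynomial (Fin n) K ⧸ I) := by
      intro r hr
      obtain ⟨hrS, hrmin⟩ := assoc_inf_primes (hprimes _) hCinf hr
      obtain ⟨G, ⟨hGf, hxG⟩, rfl⟩ := mem_Sfin.mp hrS
      refine key G hGf ?_
      intro H hH hGH
      have hxH : x ∈ H := hGH hxG
      have hle : PP K Hᶜ ≤ PP K Gᶜ := PP_mono (Finset.compl_subset_compl.mpr hGH)
      have heq := hrmin _ (mem_Sfin.mpr ⟨H, ⟨hH, hxH⟩, rfl⟩) hle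
      exact Finset.Subset.antisymm hGH (Finset.compl_subset_compl.mp (PP_le_iff.mp heq.ge))
    intro p hp q hq
    exact hunm p (hmem p hp) q (hmem q hq)
  · -- the sup ideal
    have hmem : ∀ r ∈ associatedPrimes (MvPolynomial (Fin n) K)
        (MvPolynomial (Fin n) K ⧸ (I ⊔ Ideal.span {X x})),
        r ∈ associatedPrimes (MvPolynomial (Fin n) K) (MvPolynomial (Fin n) K ⧸ I) := by
      intro r hr
      obtain ⟨hrS, hrmin⟩ := assoc_inf_primes (hprimes _) hJinf hr
      obtain ⟨G, hGdel, rfl⟩ := mem_Sfin.mp hrS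
      have hGfacet : IsFacetOf (Δ.del x) G := by
        refine ⟨hGdel, fun G' hG' hsub => ?_⟩
        have hle : PP K G'ᶜ ≤ PP K Gᶜ := PP_mono (Finset.compl_subset_compl.mpr hsub)
        have heq := hrmin _ (mem_Sfin.mpr ⟨G', hG', rfl⟩) hle
        exact Finset.Subset.antisymm hsub (Finset.compl_subset_compl.mp (PP_le_iff.mp heq.ge))
      have hins : insert x G ∉ Δ.faces := fun h => hx G ⟨hGdel.2, h⟩ hGfacet
      refine key G hGdel.1 ?_
      intro H hH hsub
      by_cases hxH : x ∈ H
      · exact absurd (Δ.down_closed hH (Finset.insert_subset hxH hsub)) hins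
      · exact hGfacet.2 H ⟨hH, hxH⟩ hsub
    intro p hp q hq
    exact hunm p (hmem p hp) q (hmem q hq)
end

section
/- Let G be a connected finite simple graph containing a basic 5-cycle. Then every vertex of degree at least 3 in the basic 5-cycle is a shedding vertex of G. -/
open MvPolynomial

/-- The independence complex of a graph: faces are the independent sets. -/
def independenceComplex (V : Type) [DecidableEq V] (G : SimpleGraph V) :
    SimplicialComplexOn V where
  faces := {F | ∀ u ∈ F, ∀ v ∈ F, ¬ G.Adj u v}
  singleton_mem := by
    intro v u hu w hw
    simp only [Finset.mem_singleton] at hu hw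
    subst hu; subst hw
    exact G.irrefl
  down_closed := by
    intro A B hA hBA u hu v hv
    exact hA u (hBA hu) v (hBA hv)

/-- A `5`-cycle in a graph, given by five distinct vertices that are cyclically adjacent. -/
def IsFiveCycle {V : Type} (G : SimpleGraph V) (c : Fin 5 → V) : Prop :=
  Function.Injective c ∧ ∀ i : Fin 5, G.Adj (c i) (c (i + 1))

/-- A basic `5`-cycle: a `5`-cycle which does not contain two adjacent vertices of
degree three or more in `G`. -/
def IsBasicFiveCycle {V : Type} [Fintype V] (G : SimpleGraph V) [DecidableRel G.Adj]
    (c : Fin 5 → V) : Prop :=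
  IsFiveCycle G c ∧
    ∀ i j : Fin 5, G.Adj (c i) (c j) → ¬ (3 ≤ G.degree (c i) ∧ 3 ≤ G.degree (c j))

/-- The induced subgraph obtained from `G` by deleting the vertices in `s`
(keeping the ambient vertex type). -/
def graphDelete {V : Type} (G : SimpleGraph V) (s : Set V) : SimpleGraph V where
  Adj u v := G.Adj u v ∧ u ∉ s ∧ v ∉ s
  symm := by
    constructor
    intro u v h
    exact ⟨h.1.symm, h.2.2, h.2.1⟩
  loopless := by
    constructor
    intro v h
    exact G.irrefl h.1

/-- The closed neighborhood `N[x] = N(x) ∪ {x}` of a vertex. -/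
def closedNbhd {V : Type} (G : SimpleGraph V) (x : V) : Set V :=
  insert x (G.neighborSet x)

/-- The edge ideal of a graph on `{x_1, …, x_n}`. -/
noncomputable def edgeIdeal (n : ℕ) (K : Type) [Field K] (G : SimpleGraph (Fin n)) :
    Ideal (MvPolynomial (Fin n) K) :=
  Ideal.span {m | ∃ u v : Fin n, G.Adj u v ∧ m = X u * X v}

/-- In a connected graph, every vertex of degree at least `3` lying on a basic `5`-cycle
is a shedding vertex of the independence complex. -/
theorem shedding_of_degree_ge_three_on_basic_five_cycle (V : Type) [Fintype V] [DecidableEq V]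
    (G : SimpleGraph V) [DecidableRel G.Adj] (hconn : G.Connected)
    (c : Fin 5 → V) (hc : IsBasicFiveCycle G c) (i : Fin 5) (hdeg : 3 ≤ G.degree (c i)) :
    (independenceComplex V G).IsSheddingVertex (c i) := by
  obtain ⟨⟨hinj, hadj⟩, hbasic⟩ := hc
  intro F hF hfacet
  obtain ⟨hxF, hFx⟩ := hF
  have hFindep : F ∈ (independenceComplex V G).faces :=
    (independenceComplex V G).down_closed hFx (Finset.subset_insert _ _)
  -- from F ∪ {x} independent: no element of F is adjacent to x
  have hnotadjF : ∀ v ∈ F, ¬ G.Adj (c i) v := fun v hv =>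
    hFx (c i) (Finset.mem_insert_self _ _) v (Finset.mem_insert_of_mem hv)
  -- key: if a is a neighbor of x whose only neighbors are x and b, and b ∉ F,
  -- then F is not a facet of the deletion
  have key : ∀ a b : V, G.Adj (c i) a → (∀ v, G.Adj a v → v = c i ∨ v = b) →
      b ∉ F → False := by
    intro a b hxa hnbr hbF
    have haF : a ∉ F := fun h => hnotadjF a h hxa
    have hins : insert a F ∈ (independenceComplex V G).faces := by
      intro u hu v hv huv
      rcases Finset.mem_insert.1 hu with hua | hu
      · rcases Finset.mem_insert.1 hv with hva | hv
        · exact G.irrefl (hua ▸ hva ▸ huv)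
        · rcases hnbr v (hua ▸ huv) with h | h
          · exact hxF (h ▸ hv)
          · exact hbF (h ▸ hv)
      · rcases Finset.mem_insert.1 hv with hva | hv
        · rcases hnbr u (hva ▸ huv.symm) with h | h
          · exact hxF (h ▸ hu)
          · exact hbF (h ▸ hu)
        · exact hFindep u hu v hv huv
    have hmem : insert a F ∈ (independenceComplex V G).del (c i) := by
      refine ⟨hins, ?_⟩
      intro h
      rcases Finset.mem_insert.1 h with h | h
      · exact G.irrefl (h ▸ hxa)
      · exact hxF h
    have := hfacet.2 _ hmem (Finset.subset_insert _ _)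
    exact haF (this ▸ Finset.mem_insert_self a F)
  -- neighbor characterization for a cycle-neighbor a of x with next vertex b
  have nbr : ∀ a b : V, G.Adj (c i) a → G.Adj a b → c i ≠ b → G.degree a ≤ 2 →
      ∀ v, G.Adj a v → v = c i ∨ v = b := by
    intro a b hxa hab hxb hdeg2 v hav
    have hsub : ({c i, b} : Finset V) ⊆ G.neighborFinset a := by
      intro u hu
      rcases Finset.mem_insert.1 hu with rfl | hu
      · exact (SimpleGraph.mem_neighborFinset _ _ _).2 hxa.symm
      · rw [Finset.mem_singleton] at hu
        exact hu ▸ (SimpleGraph.mem_neighborFinset _ _ _).2 hab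
    have hcard : (G.neighborFinset a).card ≤ ({c i, b} : Finset V).card := by
      rw [Finset.card_insert_of_notMem (by simpa using hxb), Finset.card_singleton]
      exact hdeg2
    have heq := Finset.eq_of_subset_of_card_le hsub hcard
    have : v ∈ ({c i, b} : Finset V) := by
      rw [heq]; exact (SimpleGraph.mem_neighborFinset _ _ _).2 hav
    rcases Finset.mem_insert.1 this with rfl | h
    · exact Or.inl rfl
    · exact Or.inr (Finset.mem_singleton.1 h)
  have h41 : ∀ j : Fin 5, j + 4 + 1 = j := by decide
  have h23 : ∀ j : Fin 5, j + 2 + 1 = j + 3 := by decide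
  have h34 : ∀ j : Fin 5, j + 3 + 1 = j + 4 := by decide
  have hxa1 : G.Adj (c i) (c (i + 1)) := hadj i
  have hxa4 : G.Adj (c i) (c (i + 4)) := by
    have := hadj (i + 4); rw [h41] at this; exact this.symm
  have hdeg1 : G.degree (c (i + 1)) ≤ 2 := by
    have := hbasic i (i + 1) hxa1
    by_contra h
    exact this ⟨hdeg, by omega⟩
  have hdeg4 : G.degree (c (i + 4)) ≤ 2 := by
    have := hbasic i (i + 4) hxa4
    by_contra h
    exact this ⟨hdeg, by omega⟩
  have hne2 : c i ≠ c (i + 2) := fun h => by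
    have := hinj h; omega
  have hne3 : c i ≠ c (i + 3) := fun h => by
    have := hinj h; omega
  have ha12 : G.Adj (c (i + 1)) (c (i + 2)) := by
    have := hadj (i + 1); rwa [show i + 1 + 1 = i + 2 by omega] at this
  have ha43 : G.Adj (c (i + 4)) (c (i + 3)) := by
    have := hadj (i + 3); rw [h34] at this; exact this.symm
  by_cases h2 : c (i + 2) ∈ F
  · -- then c (i+3) ∉ F since it is adjacent to c (i+2)
    have h3 : c (i + 3) ∉ F := by
      intro h3
      have := hadj (i + 2); rw [h23] at this
      exact hFindep _ h2 _ h3 this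
    exact key (c (i + 4)) (c (i + 3)) hxa4 (nbr _ _ hxa4 ha43 hne3 hdeg4) h3
  · exact key (c (i + 1)) (c (i + 2)) hxa1 (nbr _ _ hxa1 ha12 hne2 hdeg1) h2
end
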